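/- Maximal monotone graphs equal to a monotone extension: let A, Ã ⊆ ℝ^d × ℝ^d be maximally monotone graphs. If Ã contains a monotone graph which contains {(z, a(z)) : z ∈ D} for a dense set D ⊆ ℝ^d where a is a selection of A, and A is maximally monotone, then Ã = A (graphs of two maximally monotone maps containing a common monotone graph whose domain projection is dense coincide). -/
import Mathlib

open scoped RealInnerProductSpace
open Filter Metric Bornology Topology

section helpers
variable {d : ℕ}

lemma abs_apply_le_norm (v : EuclideanSpace ℝ (Fin d)) (i : Fin d) : |v i| ≤ ‖v‖ := by
  have h := abs_real_inner_le_norm (EuclideanSpace.single i (1:ℝ)) v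
  rw [EuclideanSpace.inner_single_left] at h
  simpa using h

lemma norm_le_sum_abs (v : EuclideanSpace ℝ (Fin d)) : ‖v‖ ≤ ∑ i, |v i| := by
  rcases eq_or_lt_of_le (norm_nonneg v) with h | h
  · rw [← h]; positivity
  · have key : ‖v‖ * ‖v‖ ≤ (∑ i, |v i|) * ‖v‖ := by
      calc ‖v‖ * ‖v‖ = ⟪v, v⟫ := (real_inner_self_eq_norm_mul_norm v).symm
        _ = ∑ i, v i * v i := by
            rw [PiLp.inner_apply]; rfl
        _ ≤ ∑ i, |v i| * ‖v‖ := by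
            refine Finset.sum_le_sum fun i _ => ?_
            calc v i * v i = |v i| * |v i| := (abs_mul_abs_self (v i)).symm
              _ ≤ |v i| * ‖v‖ :=
                  mul_le_mul_of_nonneg_left (abs_apply_le_norm v i) (abs_nonneg _)
        _ = (∑ i, |v i|) * ‖v‖ := by rw [Finset.sum_mul]
    exact le_of_mul_le_mul_right key h

end helpers

section locbdd
variable {d : ℕ}

lemma monotone_loc_bdd (f : EuclideanSpace ℝ (Fin d) → EuclideanSpace ℝ (Fin d))
    (hf : ∀ z w, 0 ≤ ⟪f z - f w, z - w⟫) (x : EuclideanSpace ℝ (Fin d)) :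
    ∃ M : ℝ, ∀ z ∈ Metric.ball x (1/(2*d+1)), ‖f z‖ ≤ M := by
  set e : Fin d → EuclideanSpace ℝ (Fin d) := fun i => EuclideanSpace.single i 1 with he
  have hne : ∀ i, ‖e i‖ = 1 := fun i => by simp [he]
  refine ⟨2 * ∑ i, (2*‖f (x + e i)‖ + 2*‖f (x - e i)‖), fun z hz => ?_⟩
  have hδ : ‖z - x‖ < 1/(2*d+1) := by rwa [← dist_eq_norm]
  have hd1 : (1:ℝ)/(2*d+1) ≤ 1 := by
    rw [div_le_one (by positivity)]
    have : (0:ℝ) ≤ 2*d := by positivity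
    linarith
  have hδ1 : ‖z - x‖ ≤ 1 := le_of_lt (lt_of_lt_of_le hδ hd1)
  -- generic bound for a test point y at distance 1
  have gen : ∀ y : EuclideanSpace ℝ (Fin d), ‖y - x‖ = 1 →
      ⟪f z, y - x⟫ ≤ ‖f z‖ * ‖z - x‖ + 2*‖f y‖ := by
    intro y hy
    have h0 := hf z y
    rw [inner_sub_left, sub_nonneg] at h0
    have h1 : -(‖f y‖ * ‖z - y‖) ≤ ⟪f y, z - y⟫ :=
      le_trans (neg_le_neg (abs_real_inner_le_norm (f y) (z - y))) (neg_abs_le _)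
    have hzy : ‖z - y‖ ≤ 2 := by
      have : z - y = (z - x) - (y - x) := by abel
      rw [this]
      calc ‖(z - x) - (y - x)‖ ≤ ‖z - x‖ + ‖y - x‖ := norm_sub_le _ _
        _ ≤ 2 := by rw [hy]; linarith
    have h2 : -(‖f y‖ * 2) ≤ ⟪f y, z - y⟫ := by
      refine le_trans (neg_le_neg ?_) h1
      exact mul_le_mul_of_nonneg_left hzy (norm_nonneg _)
    have h3 : ⟪f z, z - y⟫ = ⟪f z, z - x⟫ - ⟪f z, y - x⟫ := by
      rw [← inner_sub_right]; congr 1; abel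
    have h4 : ⟪f z, z - x⟫ ≤ ‖f z‖ * ‖z - x‖ := real_inner_le_norm _ _
    have h5 : -(‖f y‖ * 2) ≤ ⟪f z, z - x⟫ - ⟪f z, y - x⟫ := by
      rw [← h3]; exact le_trans h2 h0
    linarith
  have coord : ∀ i, |f z i| ≤ ‖f z‖ * ‖z - x‖ + (2*‖f (x + e i)‖ + 2*‖f (x - e i)‖) := by
    intro i
    have hip : ⟪f z, e i⟫ = f z i := by
      simp [he, EuclideanSpace.inner_single_right]
    have hplus := gen (x + e i) (by simpa using hne i)
    have hminus := gen (x - e i) (by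
      have : x - e i - x = -(e i) := by abel
      rw [this, norm_neg]; exact hne i)
    have hip1 : ⟪f z, (x + e i) - x⟫ = f z i := by
      have : (x + e i) - x = e i := by abel
      rw [this, hip]
    have hip2 : ⟪f z, (x - e i) - x⟫ = -(f z i) := by
      have : (x - e i) - x = -(e i) := by abel
      rw [this, inner_neg_right, hip]
    rw [hip1] at hplus
    rw [hip2] at hminus
    rw [abs_le]
    constructor <;>
      linarith [norm_nonneg (f (x + e i)), norm_nonneg (f (x - e i))]
  have hsum : ‖f z‖ ≤ ∑ i, (‖f z‖ * ‖z - x‖ + (2*‖f (x + e i)‖ + 2*‖f (x - e i)‖)) :=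
    le_trans (norm_le_sum_abs (f z)) (Finset.sum_le_sum fun i _ => coord i)
  rw [Finset.sum_add_distrib] at hsum
  simp only [Finset.sum_const, Finset.card_univ, Fintype.card_fin, nsmul_eq_mul] at hsum
  have hdd : (d:ℝ) * ‖z - x‖ ≤ 1/2 := by
    have hd0 : (0:ℝ) ≤ (d:ℝ) := Nat.cast_nonneg d
    have h2d : (0:ℝ) < 2*d+1 := by positivity
    rw [lt_div_iff₀ h2d] at hδ
    nlinarith [norm_nonneg (z - x)]
  nlinarith [norm_nonneg (f z)]

end locbdd

/-- A graph `G ⊆ ℝ^d × ℝ^d` is monotone if `(η₁−η₂)·(ξ₁−ξ₂) ≥ 0` for all pairs in it. -/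
def MonotoneGraph {d : ℕ} (G : Set (EuclideanSpace ℝ (Fin d) × EuclideanSpace ℝ (Fin d))) :
    Prop :=
  ∀ p ∈ G, ∀ q ∈ G, 0 ≤ ⟪p.2 - q.2, p.1 - q.1⟫

/-- A graph is maximally monotone if it is monotone and has no proper monotone extension. -/
def MaximallyMonotoneGraph {d : ℕ}
    (G : Set (EuclideanSpace ℝ (Fin d) × EuclideanSpace ℝ (Fin d))) : Prop :=
  MonotoneGraph G ∧ ∀ B, MonotoneGraph B → G ⊆ B → B = G

lemma mem_of_related {d : ℕ} {A : Set (EuclideanSpace ℝ (Fin d) × EuclideanSpace ℝ (Fin d))}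
    (hA : MaximallyMonotoneGraph A) (x ξ : EuclideanSpace ℝ (Fin d))
    (h : ∀ q ∈ A, 0 ≤ ⟪ξ - q.2, x - q.1⟫) : (x, ξ) ∈ A := by
  have hmono : MonotoneGraph (insert (x, ξ) A) := by
    rintro p hp q hq
    rcases hp with rfl | hp <;> rcases hq with rfl | hq
    · simp
    · exact h q hq
    · have := h p hp
      have e1 : p.2 - (x, ξ).2 = -(ξ - p.2) := by simp [neg_sub]
      have e2 : p.1 - (x, ξ).1 = -(x - p.1) := by simp [neg_sub]
      rw [e1, e2, inner_neg_neg]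
      exact this
    · exact hA.1 p hp q hq
  have := hA.2 _ hmono (Set.subset_insert _ _)
  rw [← this]; exact Set.mem_insert _ _

/-- Two maximally monotone graphs containing a common monotone graph, which in turn contains
`{(z, a z) : z ∈ D}` for a dense set `D` and a selection `a` of `A`, must coincide. -/
theorem maximally_monotone_graphs_coincide {d : ℕ}
    (A Atilde G : Set (EuclideanSpace ℝ (Fin d) × EuclideanSpace ℝ (Fin d)))
    (a : EuclideanSpace ℝ (Fin d) → EuclideanSpace ℝ (Fin d))
    (D : Set (EuclideanSpace ℝ (Fin d)))
    (hA : MaximallyMonotoneGraph A) (hAt : MaximallyMonotoneGraph Atilde)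
    (hG : MonotoneGraph G)
    (hD : Dense D)
    (hsel : ∀ z, (z, a z) ∈ A)
    (hGD : {p : EuclideanSpace ℝ (Fin d) × EuclideanSpace ℝ (Fin d) |
            ∃ z ∈ D, p = (z, a z)} ⊆ G)
    (hGA : G ⊆ Atilde) :
    Atilde = A := by
  have ha : ∀ z w, 0 ≤ ⟪a z - a w, z - w⟫ := fun z w =>
    hA.1 (z, a z) (hsel z) (w, a w) (hsel w)
  have hDA : ∀ z ∈ D, (z, a z) ∈ Atilde := fun z hz => hGA (hGD ⟨z, hz, rfl⟩)
  -- for every x there is a common point of A and Atilde above x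
  have key : ∀ x, ∃ ξ, (x, ξ) ∈ A ∧ (x, ξ) ∈ Atilde := by
    intro x
    obtain ⟨M, hM⟩ := monotone_loc_bdd a ha x
    obtain ⟨u, huD, hux⟩ := mem_closure_iff_seq_limit.1 (hD x)
    have hball : ∀ᶠ n in atTop, u n ∈ Metric.ball x (1/(2*d+1)) :=
      hux (Metric.ball_mem_nhds x (by positivity))
    have hfreq : ∃ᶠ n in atTop,
        a (u n) ∈ Metric.closedBall (0 : EuclideanSpace ℝ (Fin d)) M :=
      (hball.mono fun n hn => by
        simpa [Metric.mem_closedBall, dist_zero_right] using hM _ hn).frequently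
    obtain ⟨ξ, -, φ, hφ, hξ⟩ :=
      tendsto_subseq_of_frequently_bounded (isBounded_closedBall) hfreq
    have hw1 : Tendsto (fun n => u (φ n)) atTop (𝓝 x) := hux.comp hφ.tendsto_atTop
    have hw2 : Tendsto (fun n => a (u (φ n))) atTop (𝓝 ξ) := hξ
    have lim : ∀ q : EuclideanSpace ℝ (Fin d) × EuclideanSpace ℝ (Fin d),
        (∀ n, 0 ≤ ⟪a (u (φ n)) - q.2, u (φ n) - q.1⟫) → 0 ≤ ⟪ξ - q.2, x - q.1⟫ := by
      intro q hq
      have : Tendsto (fun n => ⟪a (u (φ n)) - q.2, u (φ n) - q.1⟫) atTop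
          (𝓝 ⟪ξ - q.2, x - q.1⟫) :=
        (hw2.sub tendsto_const_nhds).inner (hw1.sub tendsto_const_nhds)
      exact ge_of_tendsto' this hq
    refine ⟨ξ, mem_of_related hA x ξ fun q hq =>
        lim q fun n => hA.1 _ (hsel _) q hq,
      mem_of_related hAt x ξ fun q hq =>
        lim q fun n => hAt.1 _ (hDA _ (huD (φ n))) q hq⟩
  -- Atilde ⊆ A via the midpoint trick
  have hsub : Atilde ⊆ A := by
    rintro ⟨x, ξ⟩ hx
    refine mem_of_related hA x ξ ?_
    rintro ⟨y, η⟩ hy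
    obtain ⟨ξ₀, hm1, hm2⟩ := key ((2:ℝ)⁻¹ • (x + y))
    have h1 : 0 ≤ ⟪ξ - ξ₀, x - (2:ℝ)⁻¹ • (x + y)⟫ :=
      hAt.1 (x, ξ) hx ((2:ℝ)⁻¹ • (x + y), ξ₀) hm2
    have h2 : 0 ≤ ⟪ξ₀ - η, (2:ℝ)⁻¹ • (x + y) - y⟫ :=
      hA.1 ((2:ℝ)⁻¹ • (x + y), ξ₀) hm1 (y, η) hy
    have e1 : x - (2:ℝ)⁻¹ • (x + y) = (2:ℝ)⁻¹ • (x - y) := by module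
    have e2 : (2:ℝ)⁻¹ • (x + y) - y = (2:ℝ)⁻¹ • (x - y) := by module
    rw [e1, real_inner_smul_right] at h1
    rw [e2, real_inner_smul_right] at h2
    have h1' : 0 ≤ ⟪ξ - ξ₀, x - y⟫ := by nlinarith
    have h2' : 0 ≤ ⟪ξ₀ - η, x - y⟫ := by nlinarith
    have : ξ - η = (ξ - ξ₀) + (ξ₀ - η) := by abel
    show 0 ≤ ⟪ξ - η, x - y⟫
    rw [this, inner_add_left]
    exact add_nonneg h1' h2'
  exact (hAt.2 A hA.1 hsub).symm
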